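/- arXiv:1307.4875 — 4 statements merged into one kernel-verified Lean document; each statement's English description precedes it below -/
import Mathlib

section
/- Let Γ be a finite subgroup of SO(4) that is isomorphic as an abstract group to SL(2, ZMod 5). Then the action of Γ on ℝ⁴ is free away from the origin: every nonidentity element of Γ fixes no nonzero vector of ℝ⁴; in particular Γ acts freely on the unit sphere S³. -/
noncomputable section

abbrev En (n : ℕ) : Type := EuclideanSpace ℝ (Fin n)

/-- The orthogonal group `O(n)`: linear isometric equivalences of `EuclideanSpace ℝ (Fin n)`. -/
abbrev OG (n : ℕ) : Type := En n ≃ₗᵢ[ℝ] En n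

instance OGact (n : ℕ) : MulAction (OG n) (En n) where
  smul g x := g x
  one_smul _ := rfl
  mul_smul _ _ _ := rfl

/-- `g` has determinant one (membership in `SO(n)` for orthogonal `g`). -/
def detOne {n : ℕ} (g : OG n) : Prop :=
  LinearMap.det (g.toLinearEquiv : En n →ₗ[ℝ] En n) = 1

/-- The fixed-point subspace of a single orthogonal transformation. -/
def fixedBy {n : ℕ} (g : OG n) : Submodule ℝ (En n) where
  carrier := {x | g x = x}
  add_mem' := by
    intro a b ha hb
    simp only [Set.mem_setOf_eq, map_add] at *
    rw [ha, hb]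
  zero_mem' := by simp only [Set.mem_setOf_eq, map_zero]
  smul_mem' := by
    intro c a ha
    simp only [Set.mem_setOf_eq, map_smul] at *
    rw [ha]

/-- A pseudoreflection: an orthogonal transformation whose fixed-point subspace
has dimension `n - 2`. -/
def IsPseudoreflection {n : ℕ} (g : OG n) : Prop :=
  Module.finrank ℝ (fixedBy g) = n - 2

/-- `Fix(H)`: the subspace fixed pointwise by a subgroup `H`. -/
def fixedSub {n : ℕ} (H : Subgroup (OG n)) : Submodule ℝ (En n) where
  carrier := {x | ∀ g ∈ H, g x = x}
  add_mem' := by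
    intro a b ha hb g hg
    simp only [map_add, ha g hg, hb g hg]
  zero_mem' := by intro g _; simp only [map_zero]
  smul_mem' := by
    intro c a ha g hg
    simp only [map_smul, ha g hg]

/-- `F_Γ(L)`: the maximal subgroup of `Γ` fixing `L` pointwise. -/
def Fsub {n : ℕ} (Γ : Subgroup (OG n)) (L : Submodule ℝ (En n)) : Subgroup (OG n) where
  carrier := {g | g ∈ Γ ∧ ∀ x ∈ L, g x = x}
  one_mem' := ⟨Γ.one_mem, fun _ _ => rfl⟩
  mul_mem' := by
    rintro a b ⟨haΓ, ha⟩ ⟨hbΓ, hb⟩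
    refine ⟨Γ.mul_mem haΓ hbΓ, fun x hx => ?_⟩
    show a (b x) = x
    rw [hb x hx, ha x hx]
  inv_mem' := by
    rintro a ⟨haΓ, ha⟩
    refine ⟨Γ.inv_mem haΓ, fun x hx => ?_⟩
    show a.symm x = x
    conv_lhs => rw [← ha x hx]
    exact a.symm_apply_apply x

/-- A minimal subgroup of the action of `Γ`: nontrivial, of the form
`Γ' = F_Γ(Fix(Γ'))`, and minimal with respect to inclusion among nontrivial
subgroups of this form. -/
def IsMinimalSubgroup {n : ℕ} (Γ Γ' : Subgroup (OG n)) : Prop :=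
  Γ' ≤ Γ ∧ Γ' ≠ ⊥ ∧ Γ' = Fsub Γ (fixedSub Γ') ∧
    ∀ Γ'' : Subgroup (OG n), Γ'' ≠ ⊥ → Γ'' = Fsub Γ (fixedSub Γ'') → Γ'' ≤ Γ' → Γ'' = Γ'

/-- `Γ_min`: the subgroup generated by all minimal subgroups of the action of `Γ`. -/
def minGen {n : ℕ} (Γ : Subgroup (OG n)) : Subgroup (OG n) :=
  ⨆ Γ' ∈ {Γ' : Subgroup (OG n) | IsMinimalSubgroup Γ Γ'}, Γ'

/-- Two subspaces are orthogonal. -/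
def OrthSubspaces {n : ℕ} (U W : Submodule ℝ (En n)) : Prop :=
  ∀ u ∈ U, ∀ w ∈ W, (inner ℝ u w : ℝ) = 0

abbrev SL2 (p : ℕ) := Matrix.SpecialLinearGroup (Fin 2) (ZMod p)

/-- `Γ = Γ_ps × P₁ × ⋯ × P_k` in standard form, with the factors acting in
pairwise orthogonal spaces: `Γ_ps` is generated by pseudoreflections, each `Pᵢ`
is isomorphic to `SL(2,5)` with `Fix(Pᵢ)ᗮ` four-dimensional and acting freely on
`Fix(Pᵢ)ᗮ \ {0}`, the subspaces `Fix(Γ_ps)ᗮ, Fix(P₁)ᗮ, …, Fix(P_k)ᗮ` are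
pairwise orthogonal, and `Γ` is the internal direct product of these subgroups. -/
def IsStandardForm {n : ℕ} (Γ : Subgroup (OG n)) (k : ℕ) : Prop :=
  ∃ (G0 : Subgroup (OG n)) (P : Fin k → Subgroup (OG n)),
    G0 ≤ Γ ∧ (∀ i, P i ≤ Γ) ∧
    (∃ S : Set (OG n), (∀ g ∈ S, IsPseudoreflection g) ∧ G0 = Subgroup.closure S) ∧
    (∀ i, Nonempty (P i ≃* SL2 5)) ∧
    (∀ i, Module.finrank ℝ ((fixedSub (P i))ᗮ : Submodule ℝ (En n)) = 4) ∧
    (∀ i, ∀ g ∈ P i, g ≠ 1 → ∀ x ∈ (fixedSub (P i))ᗮ, x ≠ 0 → g x ≠ x) ∧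
    (∀ i, OrthSubspaces ((fixedSub G0)ᗮ) ((fixedSub (P i))ᗮ)) ∧
    (∀ i j, i ≠ j → OrthSubspaces ((fixedSub (P i))ᗮ) ((fixedSub (P j))ᗮ)) ∧
    (∀ g ∈ G0, ∀ i, ∀ h ∈ P i, g * h = h * g) ∧
    (∀ i j, i ≠ j → ∀ g ∈ P i, ∀ h ∈ P j, g * h = h * g) ∧
    (∀ i, G0 ⊓ P i = ⊥) ∧
    (∀ i j, i ≠ j → P i ⊓ P j = ⊥) ∧
    Γ = G0 ⊔ (⨆ i, P i)

/-- The orbit space `ℝⁿ/Γ` with the quotient topology. -/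
abbrev SpaceQuot {n : ℕ} (Γ : Subgroup (OG n)) : Type :=
  Quotient (MulAction.orbitRel Γ (En n))

/-- The unit sphere `S^{n-1}` in `EuclideanSpace ℝ (Fin n)`. -/
abbrev Sph (n : ℕ) := Metric.sphere (0 : En n) 1

instance sphAct (n : ℕ) : MulAction (OG n) (Sph n) where
  smul g x := ⟨g (x : En n), by
    rw [mem_sphere_zero_iff_norm, g.norm_map]
    exact mem_sphere_zero_iff_norm.mp x.2⟩
  one_smul x := Subtype.ext rfl
  mul_smul g h x := Subtype.ext rfl

/-- The orbit space `S^{n-1}/Γ` with the quotient topology. -/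
abbrev SphereQuot {n : ℕ} (Γ : Subgroup (OG n)) : Type :=
  Quotient (MulAction.orbitRel Γ (Sph n))

-- ===================== auxiliary lemmas =====================

set_option maxRecDepth 100000
set_option maxHeartbeats 1600000

open Matrix Module

-- #### SL(2,5): decidable matrix facts

lemma matD1 : ∀ A : Matrix (Fin 2) (Fin 2) (ZMod 5), A.det = 1 → A * A = 1 →
    A = 1 ∨ A = -1 := by decide

lemma matD2 : ∀ A : Matrix (Fin 2) (Fin 2) (ZMod 5), A.det = 1 →
    (A = 1 ∨ A^2 = 1 ∨ A^3 = 1 ∨ A^4 = 1 ∨ A^5 = 1 ∨ A^6 = 1 ∨ A^10 = 1) := by decide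

lemma matD3 : ∀ A : Matrix (Fin 2) (Fin 2) (ZMod 5), A.det = 1 → (A^3 = 1 ∨ A^5 = 1) →
    ∃ T : Matrix (Fin 2) (Fin 2) (ZMod 5), T.det = 1 ∧ T * T = -1 ∧ A * T * A = T := by decide

instance : DecidableEq (SL2 5) := fun a b =>
  decidable_of_iff ((a : Matrix (Fin 2) (Fin 2) (ZMod 5)) = b) Subtype.ext_iff.symm

def negOne : SL2 5 := ⟨-1, by decide⟩

lemma negOne_ne_one : negOne ≠ 1 := by decide

lemma negOne_mul_self : negOne * negOne = 1 := by decide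

lemma negOne_comm (a : SL2 5) : a * negOne = negOne * a := by
  apply Subtype.ext
  show (a : Matrix (Fin 2) (Fin 2) (ZMod 5)) * (-1) = (-1) * (a : Matrix (Fin 2) (Fin 2) (ZMod 5))
  rw [Matrix.mul_neg, Matrix.neg_mul, Matrix.mul_one, Matrix.one_mul]

def wa1 : SL2 5 := ⟨!![0,1;4,0], by decide⟩
def wa2 : SL2 5 := ⟨!![1,1;2,3], by decide⟩
def wb1 : SL2 5 := ⟨!![0,1;4,0], by decide⟩
def wb2 : SL2 5 := ⟨!![1,2;1,3], by decide⟩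
def wu : SL2 5 := ⟨!![3,0;0,2], by decide⟩
def wv : SL2 5 := ⟨!![0,3;3,0], by decide⟩

lemma rel_u : wu * (wa2 * wa1) = wa1 * wa2 := by decide
lemma rel_v : wv * (wb2 * wb1) = wb1 * wb2 := by decide
lemma rel_z : negOne * (wv * wu) = wu * wv := by decide

lemma pow_eq_one_of_matrix {a : SL2 5} {k : ℕ}
    (h : (a : Matrix (Fin 2) (Fin 2) (ZMod 5)) ^ k = 1) : a ^ k = 1 :=
  Subtype.ext (by rw [Matrix.SpecialLinearGroup.coe_pow, h]; rfl)

lemma prime_dvd_small {p k : ℕ} (hp : p.Prime)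
    (hk : k = 2 ∨ k = 3 ∨ k = 4 ∨ k = 5 ∨ k = 6 ∨ k = 10) (h : p ∣ k) :
    p = 2 ∨ p = 3 ∨ p = 5 := by
  have h2 := hp.two_le
  have hle : p ≤ 10 := by
    have hkpos : 0 < k := by rcases hk with rfl|rfl|rfl|rfl|rfl|rfl <;> norm_num
    have := Nat.le_of_dvd hkpos h
    rcases hk with rfl|rfl|rfl|rfl|rfl|rfl <;> omega
  interval_cases p <;> rcases hk with rfl|rfl|rfl|rfl|rfl|rfl <;> revert h hp <;> decide

open Matrix

lemma orth_entries (A : Matrix (Fin 2) (Fin 2) ℝ) (h : Aᵀ * A = 1) :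
    A 0 0 ^ 2 + A 1 0 ^ 2 = 1 ∧ A 0 0 * A 0 1 + A 1 0 * A 1 1 = 0 ∧ A 0 1 ^ 2 + A 1 1 ^ 2 = 1 := by
  have h00 := congrFun (congrFun h 0) 0
  have h01 := congrFun (congrFun h 0) 1
  have h11 := congrFun (congrFun h 1) 1
  simp [Matrix.mul_apply, Fin.sum_univ_two, Matrix.one_apply] at h00 h01 h11
  refine ⟨by nlinarith [h00], by nlinarith [h01], by nlinarith [h11]⟩

lemma so2_form (A : Matrix (Fin 2) (Fin 2) ℝ) (h : Aᵀ * A = 1) (hd : A.det = 1) :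
    A 1 1 = A 0 0 ∧ A 1 0 = -(A 0 1) := by
  obtain ⟨h1, h2, h3⟩ := orth_entries A h
  rw [Matrix.det_fin_two] at hd
  constructor
  · linear_combination (-(A 1 1)) * h1 + A 1 0 * h2 + A 0 0 * hd
  · linear_combination (-(A 1 0)) * h3 + A 1 1 * h2 + (-(A 0 1)) * hd

lemma o2_form (A : Matrix (Fin 2) (Fin 2) ℝ) (h : Aᵀ * A = 1) (hd : A.det = -1) :
    A 1 1 = -(A 0 0) ∧ A 1 0 = A 0 1 := by
  obtain ⟨h1, h2, h3⟩ := orth_entries A h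
  rw [Matrix.det_fin_two] at hd
  constructor
  · linear_combination (-(A 1 1)) * h1 + A 1 0 * h2 + A 0 0 * hd
  · linear_combination (-(A 1 0)) * h3 + A 1 1 * h2 + (-(A 0 1)) * hd

lemma so2_comm (A B : Matrix (Fin 2) (Fin 2) ℝ) (hA : Aᵀ * A = 1) (hB : Bᵀ * B = 1)
    (dA : A.det = 1) (dB : B.det = 1) : A * B = B * A := by
  obtain ⟨a1, a2⟩ := so2_form A hA dA
  obtain ⟨b1, b2⟩ := so2_form B hB dB
  rw [Matrix.eta_fin_two A, Matrix.eta_fin_two B, a1, a2, b1, b2, Matrix.mul_fin_two,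
    Matrix.mul_fin_two]
  congr 1 <;> ring

lemma o2_sq (A : Matrix (Fin 2) (Fin 2) ℝ) (hA : Aᵀ * A = 1) (dA : A.det = -1) : A * A = 1 := by
  obtain ⟨h1, h2, h3⟩ := orth_entries A hA
  obtain ⟨a1, a2⟩ := o2_form A hA dA
  rw [a2] at h1
  rw [Matrix.eta_fin_two A, a1, a2, Matrix.mul_fin_two, Matrix.one_fin_two]
  congr 1
  ring_nf
  rw [h1]

lemma orth_det_pm {k : ℕ} (A : Matrix (Fin k) (Fin k) ℝ) (h : Aᵀ * A = 1) :
    A.det = 1 ∨ A.det = -1 := by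
  have := congrArg Matrix.det h
  rw [Matrix.det_mul, Matrix.det_transpose, Matrix.det_one] at this
  exact mul_self_eq_one_iff.mp this

lemma orth_det_ne {k : ℕ} (A : Matrix (Fin k) (Fin k) ℝ) (h : Aᵀ * A = 1) :
    A.det ≠ 0 := by
  rcases orth_det_pm A h with h' | h' <;> rw [h'] <;> norm_num

lemma orth_cancel {k : ℕ} (A Z : Matrix (Fin k) (Fin k) ℝ) (hA : Aᵀ * A = 1)
    (h : Z * A = A) : Z = 1 := by
  have h' : A * Aᵀ = 1 := mul_eq_one_comm.mp hA
  calc Z = Z * (A * Aᵀ) := by rw [h', mul_one]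
    _ = (Z * A) * Aᵀ := by rw [mul_assoc]
    _ = A * Aᵀ := by rw [h]
    _ = 1 := h'

lemma orth_mul {k : ℕ} (A B : Matrix (Fin k) (Fin k) ℝ) (hA : Aᵀ * A = 1) (hB : Bᵀ * B = 1) :
    (A * B)ᵀ * (A * B) = 1 := by
  rw [Matrix.transpose_mul, mul_assoc, ← mul_assoc Aᵀ A B, hA, one_mul, hB]

local notation "E4" => EuclideanSpace ℝ (Fin 4)

variable {W : Submodule ℝ E4} {k : ℕ}

def matOf (b : OrthonormalBasis (Fin k) ℝ W) (γ : E4 ≃ₗᵢ[ℝ] E4) (hγ : ∀ x ∈ W, γ x ∈ W) :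
    Matrix (Fin k) (Fin k) ℝ :=
  LinearMap.toMatrix b.toBasis b.toBasis ((γ.toLinearEquiv : E4 →ₗ[ℝ] E4).restrict hγ)

lemma matOf_congr (b : OrthonormalBasis (Fin k) ℝ W) {γ δ : E4 ≃ₗᵢ[ℝ] E4} (h : γ = δ)
    (hγ : ∀ x ∈ W, γ x ∈ W) (hδ : ∀ x ∈ W, δ x ∈ W) : matOf b γ hγ = matOf b δ hδ := by
  subst h; rfl

lemma matOf_mul (b : OrthonormalBasis (Fin k) ℝ W) (γ δ : E4 ≃ₗᵢ[ℝ] E4)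
    (hγ : ∀ x ∈ W, γ x ∈ W) (hδ : ∀ x ∈ W, δ x ∈ W) (hγδ : ∀ x ∈ W, (γ * δ) x ∈ W) :
    matOf b (γ * δ) hγδ = matOf b γ hγ * matOf b δ hδ := by
  rw [matOf, matOf, matOf, ← LinearMap.toMatrix_comp b.toBasis b.toBasis b.toBasis]
  congr 1

lemma matOf_id (b : OrthonormalBasis (Fin k) ℝ W) (γ : E4 ≃ₗᵢ[ℝ] E4)
    (hγ : ∀ x ∈ W, γ x ∈ W) (hid : ∀ w ∈ W, γ w = w) : matOf b γ hγ = 1 := by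
  rw [matOf]
  have : (γ.toLinearEquiv : E4 →ₗ[ℝ] E4).restrict hγ = LinearMap.id := by
    refine LinearMap.ext fun x => Subtype.ext ?_
    simp [LinearMap.restrict_apply, hid x.1 x.2]
  rw [this, LinearMap.toMatrix_id]

lemma matOf_neg (b : OrthonormalBasis (Fin k) ℝ W) (γ : E4 ≃ₗᵢ[ℝ] E4)
    (hγ : ∀ x ∈ W, γ x ∈ W) (hneg : ∀ w ∈ W, γ w = -w) : matOf b γ hγ = -1 := by
  rw [matOf]
  have : (γ.toLinearEquiv : E4 →ₗ[ℝ] E4).restrict hγ = -LinearMap.id := by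
    refine LinearMap.ext fun x => Subtype.ext ?_
    simp [LinearMap.restrict_apply, hneg x.1 x.2]
  have hrw : (-LinearMap.id : W →ₗ[ℝ] W) = (-1 : ℝ) • LinearMap.id := by
    ext x; simp
  rw [this, hrw, LinearEquiv.map_smul, LinearMap.toMatrix_id, neg_one_smul]

lemma matOf_fix (b : OrthonormalBasis (Fin k) ℝ W) (γ : E4 ≃ₗᵢ[ℝ] E4)
    (hγ : ∀ x ∈ W, γ x ∈ W) (h : matOf b γ hγ = 1) : ∀ w ∈ W, γ w = w := by
  intro w hw
  have h2 : (γ.toLinearEquiv : E4 →ₗ[ℝ] E4).restrict hγ = LinearMap.id := by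
    apply (LinearMap.toMatrix b.toBasis b.toBasis).injective
    rw [← matOf, h, LinearMap.toMatrix_id]
  have := LinearMap.ext_iff.mp h2 ⟨w, hw⟩
  exact congrArg Subtype.val this

lemma matOf_orth (b : OrthonormalBasis (Fin k) ℝ W) (γ : E4 ≃ₗᵢ[ℝ] E4)
    (hγ : ∀ x ∈ W, γ x ∈ W) : (matOf b γ hγ)ᵀ * matOf b γ hγ = 1 := by
  set F := ((γ.toLinearEquiv : E4 →ₗ[ℝ] E4).restrict hγ) with hF
  have hA : ∀ i j, matOf b γ hγ i j = b.repr (F (b j)) i := by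
    intro i j
    rw [matOf, LinearMap.toMatrix_apply, ← b.coe_toBasis_repr_apply, b.coe_toBasis]
  ext i j
  rw [Matrix.mul_apply, Matrix.one_apply]
  have key : ∀ l, (matOf b γ hγ)ᵀ i l * matOf b γ hγ l j
      = b.repr (F (b i)) l * b.repr (F (b j)) l := by
    intro l; rw [Matrix.transpose_apply, hA, hA]
  rw [Finset.sum_congr rfl fun l _ => key l]
  have honb : Orthonormal ℝ (fun i => (b i : E4)) := by
    rw [orthonormal_iff_ite]
    intro i j
    rw [← Submodule.coe_inner]
    exact orthonormal_iff_ite.mp b.orthonormal i j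
  have hsum : ∀ u : W, (u : E4) = ∑ l, b.repr u l • (b l : E4) := by
    intro u
    conv_lhs => rw [← b.sum_repr u]
    push_cast
    rfl
  have e1 : ∑ l, b.repr (F (b i)) l * b.repr (F (b j)) l
      = (inner ℝ ((F (b i)) : E4) ((F (b j)) : E4) : ℝ) := by
    rw [hsum (F (b i)), hsum (F (b j)), honb.inner_sum]
    simp [starRingEnd_apply, star_trivial]
  rw [e1]
  have h1 : ((F (b i)) : E4) = γ (b i) := rfl
  have h2 : ((F (b j)) : E4) = γ (b j) := rfl
  rw [h1, h2, γ.inner_map_map, ← Submodule.coe_inner,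
    orthonormal_iff_ite.mp b.orthonormal]

lemma preserve_orth (γ : E4 ≃ₗᵢ[ℝ] E4) (V : Submodule ℝ E4) (h : ∀ v ∈ V, γ v ∈ V) :
    ∀ w ∈ Vᗮ, γ w ∈ Vᗮ := by
  intro w hw
  rw [Submodule.mem_orthogonal]
  intro u hu
  have hT : Function.Surjective ((γ.toLinearEquiv : E4 →ₗ[ℝ] E4).restrict h) := by
    rw [← LinearMap.injective_iff_surjective]
    intro a c hac
    have : γ (a : E4) = γ (c : E4) := Subtype.ext_iff.mp hac
    exact Subtype.ext (γ.injective this)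
  obtain ⟨u', hu'⟩ := hT ⟨u, hu⟩
  have hval : γ (u' : E4) = u := congrArg Subtype.val hu'
  rw [← hval, γ.inner_map_map]
  exact hw (u' : E4) u'.2

lemma decompose (V : Submodule ℝ E4) (x : E4) : ∃ v ∈ V, ∃ w ∈ Vᗮ, x = v + w := by
  have hx : x ∈ V ⊔ Vᗮ := by rw [Submodule.sup_orthogonal_of_hasOrthogonalProjection]; trivial
  obtain ⟨v, hv, w, hw, hvw⟩ := Submodule.mem_sup.mp hx
  exact ⟨v, hv, w, hw, hvw.symm⟩

-- #### group-theoretic core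

lemma mem_fixedBy {n : ℕ} {g : OG n} {x : En n} : x ∈ fixedBy g ↔ g x = x := Iff.rfl

lemma matrix_neg_one_ne_one : (-1 : Matrix (Fin 2) (Fin 2) ℝ) ≠ 1 := by
  intro h
  have := congrFun (congrFun h 0) 0
  norm_num [Matrix.neg_apply, Matrix.one_apply] at this

lemma orth_cancel_left {k : ℕ} (T X : Matrix (Fin k) (Fin k) ℝ) (hT : Tᵀ * T = 1)
    (h : T * X = T) : X = 1 := by
  calc X = 1 * X := (one_mul X).symm
    _ = (Tᵀ * T) * X := by rw [hT]
    _ = Tᵀ * (T * X) := by rw [mul_assoc]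
    _ = Tᵀ * T := by rw [h]
    _ = 1 := hT

lemma step1core (Γ : Subgroup (OG 4)) (e : Γ ≃* SL2 5) (Wm : Submodule ℝ (En 4)) {m : ℕ}
    (hm : m = 1 ∨ m = 2 ∨ m = 3) (b : OrthonormalBasis (Fin m) ℝ Wm)
    (hWinv : ∀ γ : Γ, ∀ w ∈ Wm, (γ : OG 4) w ∈ Wm)
    (hzW : ∀ w ∈ Wm, ((e.symm negOne : Γ) : OG 4) w = -w) : False := by
  set z : Γ := e.symm negOne with hz
  set u : Γ := e.symm wu with hu
  set v : Γ := e.symm wv with hv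
  set α1 : Γ := e.symm wa1 with hα1
  set α2 : Γ := e.symm wa2 with hα2
  set β1 : Γ := e.symm wb1 with hβ1
  set β2 : Γ := e.symm wb2 with hβ2
  have Ru : u * (α2 * α1) = α1 * α2 := by
    apply e.injective
    simp only [hu, hα1, hα2, _root_.map_mul, MulEquiv.apply_symm_apply]
    exact rel_u
  have Rv : v * (β2 * β1) = β1 * β2 := by
    apply e.injective
    simp only [hv, hβ1, hβ2, _root_.map_mul, MulEquiv.apply_symm_apply]
    exact rel_v
  have Rz : z * (v * u) = u * v := by
    apply e.injective
    simp only [hz, hu, hv, _root_.map_mul, MulEquiv.apply_symm_apply]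
    exact rel_z
  set M : Γ → Matrix (Fin m) (Fin m) ℝ := fun γ => matOf b ↑γ (hWinv γ) with hM
  have Mmul : ∀ γ δ : Γ, M (γ * δ) = M γ * M δ := fun γ δ =>
    matOf_mul b ↑γ ↑δ (hWinv γ) (hWinv δ) (hWinv (γ * δ))
  have Morth : ∀ γ : Γ, (M γ)ᵀ * M γ = 1 := fun γ => matOf_orth b ↑γ (hWinv γ)
  have Mz : M z = -1 := matOf_neg b ↑z (hWinv z) hzW
  have hMu : M u * (M α2 * M α1) = M α1 * M α2 := by
    have h := congrArg M Ru
    rwa [Mmul, Mmul, Mmul] at h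
  have hMv : M v * (M β2 * M β1) = M β1 * M β2 := by
    have h := congrArg M Rv
    rwa [Mmul, Mmul, Mmul] at h
  have hMz : M z * (M v * M u) = M u * M v := by
    have h := congrArg M Rz
    rwa [Mmul, Mmul, Mmul] at h
  have detstep : ∀ X Y Zm : Matrix (Fin m) (Fin m) ℝ, Xᵀ * X = 1 → Yᵀ * Y = 1 →
      Zm * (X * Y) = Y * X → Zm.det = 1 := by
    intro X Y Zm hX hY hrel
    have hd := congrArg Matrix.det hrel
    rw [Matrix.det_mul, Matrix.det_mul, Matrix.det_mul] at hd
    have hX0 : X.det ≠ 0 := orth_det_ne X hX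
    have hY0 : Y.det ≠ 0 := orth_det_ne Y hY
    have h1 : Zm.det * (X.det * Y.det) = X.det * Y.det := by
      rw [hd]; ring
    rcases mul_left_eq_self₀.mp h1 with h2 | h2
    · exact h2
    · exact absurd h2 (mul_ne_zero hX0 hY0)
  have hdu : (M u).det = 1 := detstep (M α2) (M α1) (M u) (Morth α2) (Morth α1) hMu
  have hdv : (M v).det = 1 := detstep (M β2) (M β1) (M v) (Morth β2) (Morth β1) hMv
  have hdz : (M z).det = 1 := detstep (M v) (M u) (M z) (Morth v) (Morth u) hMz
  have hdet_neg : (M z).det = (-1 : ℝ)^m := by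
    rw [Mz, show (-1 : Matrix (Fin m) (Fin m) ℝ) = -(1 : Matrix (Fin m) (Fin m) ℝ) from rfl]
    simp [Matrix.det_neg]
  rcases hm with hm | hm | hm
  · subst hm
    rw [hdz] at hdet_neg
    norm_num at hdet_neg
  · subst hm
    have hcomm : M u * M v = M v * M u := so2_comm _ _ (Morth u) (Morth v) hdu hdv
    have hZ1 : M z = 1 :=
      orth_cancel (M v * M u) (M z) (orth_mul _ _ (Morth v) (Morth u)) (by rw [hMz, hcomm])
    rw [Mz] at hZ1
    exact matrix_neg_one_ne_one hZ1
  · subst hm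
    rw [hdz] at hdet_neg
    norm_num at hdet_neg

lemma step1 (Γ : Subgroup (OG 4)) (e : Γ ≃* SL2 5) :
    ∀ x : En 4, ((e.symm negOne : Γ) : OG 4) x = x → x = 0 := by
  intro x hx
  by_contra hx0
  set z : Γ := e.symm negOne with hzdef
  have hz1 : z ≠ 1 := by
    intro h
    apply negOne_ne_one
    rw [← e.apply_symm_apply negOne, ← hzdef, h, _root_.map_one]
  have hzOG : ((z : Γ) : OG 4) ≠ 1 := by
    intro h
    exact hz1 (Subtype.ext (by rw [h]; rfl))
  have hcom : ∀ γ : Γ, γ * z = z * γ := fun γ => e.injective (by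
    rw [_root_.map_mul, _root_.map_mul, hzdef, e.apply_symm_apply]
    exact negOne_comm (e γ))
  set V : Submodule ℝ (En 4) := fixedBy ((z : Γ) : OG 4) with hVdef
  have hxV : x ∈ V := hx
  have hVinv : ∀ γ : Γ, ∀ v ∈ V, (γ : OG 4) v ∈ V := by
    intro γ v hv
    show ((z : Γ) : OG 4) ((γ : OG 4) v) = (γ : OG 4) v
    have h1 : ((z * γ : Γ) : OG 4) v = ((γ * z : Γ) : OG 4) v := by rw [hcom]
    have h2 : ((z * γ : Γ) : OG 4) v = ((z : Γ) : OG 4) (((γ : Γ) : OG 4) v) := rfl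
    have h3 : ((γ * z : Γ) : OG 4) v = ((γ : Γ) : OG 4) (((z : Γ) : OG 4) v) := rfl
    rw [h2, h3] at h1
    rw [h1, show ((z : Γ) : OG 4) v = v from hv]
  have hWinv : ∀ γ : Γ, ∀ w ∈ Vᗮ, (γ : OG 4) w ∈ Vᗮ := fun γ => preserve_orth _ V (hVinv γ)
  have hzz : z * z = 1 := e.injective (by
    rw [_root_.map_mul, hzdef, e.apply_symm_apply, _root_.map_one]
    exact negOne_mul_self)
  have hzW : ∀ w ∈ Vᗮ, ((z : Γ) : OG 4) w = -w := by
    intro w hw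
    have hzzOG : ((z : Γ) : OG 4) (((z : Γ) : OG 4) w) = w := by
      have h1 : ((z * z : Γ) : OG 4) w = w := by rw [hzz]; rfl
      exact h1
    have hmemV : w + ((z : Γ) : OG 4) w ∈ V := by
      show ((z : Γ) : OG 4) (w + ((z : Γ) : OG 4) w) = w + ((z : Γ) : OG 4) w
      rw [_root_.map_add, hzzOG, add_comm]
    have hmemW : w + ((z : Γ) : OG 4) w ∈ Vᗮ := Submodule.add_mem _ hw (hWinv z w hw)
    have h0 : w + ((z : Γ) : OG 4) w = 0 := by
      have hmem := Submodule.mem_inf.mpr ⟨hmemV, hmemW⟩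
      rwa [Submodule.inf_orthogonal_eq_bot, Submodule.mem_bot] at hmem
    rw [add_comm] at h0
    exact add_eq_zero_iff_eq_neg.mp h0
  have hfr : finrank ℝ V + finrank ℝ Vᗮ = 4 := by
    have h := Submodule.finrank_add_finrank_orthogonal (K := V)
    rwa [finrank_euclideanSpace_fin] at h
  have hV0 : finrank ℝ V ≠ 0 := by
    intro h
    have hbot : V = ⊥ := Submodule.finrank_eq_zero.mp h
    rw [hbot, Submodule.mem_bot] at hxV
    exact hx0 hxV
  have hV4 : finrank ℝ V ≠ 4 := by
    intro h
    have hT : V = ⊤ := Submodule.eq_top_of_finrank_eq (by rw [h, finrank_euclideanSpace_fin])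
    apply hzOG
    apply LinearIsometryEquiv.ext
    intro y
    have hy : y ∈ V := by rw [hT]; trivial
    exact hy
  have hm : finrank ℝ ↥Vᗮ = 1 ∨ finrank ℝ ↥Vᗮ = 2 ∨ finrank ℝ ↥Vᗮ = 3 := by omega
  exact step1core Γ e Vᗮ hm (stdOrthonormalBasis ℝ ↥Vᗮ) hWinv hzW

lemma step1' (Γ : Subgroup (OG 4)) (e : Γ ≃* SL2 5) :
    ∀ y : En 4, ((e.symm negOne : Γ) : OG 4) y = -y := by
  intro y
  set z : Γ := e.symm negOne with hzdef
  have hzz : z * z = 1 := e.injective (by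
    rw [_root_.map_mul, hzdef, e.apply_symm_apply, _root_.map_one]
    exact negOne_mul_self)
  have hzzOG : ((z : Γ) : OG 4) (((z : Γ) : OG 4) y) = y := by
    have h1 : ((z * z : Γ) : OG 4) y = y := by rw [hzz]; rfl
    exact h1
  have hfix : ((z : Γ) : OG 4) (y + ((z : Γ) : OG 4) y) = y + ((z : Γ) : OG 4) y := by
    rw [_root_.map_add, hzzOG, add_comm]
  have h0 := step1 Γ e _ hfix
  rw [add_comm] at h0
  exact add_eq_zero_iff_eq_neg.mp h0

lemma dim_one_contr (t' : OG 4) (U : Submodule ℝ (En 4)) (hU : finrank ℝ U = 1)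
    (htU : ∀ v ∈ U, t' v ∈ U) (htt : ∀ y, t' (t' y) = -y) : False := by
  have hUne : U ≠ ⊥ := by
    intro h
    rw [h, finrank_bot] at hU
    norm_num at hU
  obtain ⟨v₀, hv₀U, hv₀⟩ := Submodule.exists_mem_ne_zero_of_ne_bot hUne
  have hspan : Submodule.span ℝ {v₀} = U := by
    apply Submodule.eq_of_le_of_finrank_le
    · rw [Submodule.span_le]
      simpa using hv₀U
    · rw [hU, finrank_span_singleton hv₀]
  have htv : t' v₀ ∈ Submodule.span ℝ {v₀} := by
    rw [hspan]
    exact htU v₀ hv₀U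
  obtain ⟨c, hc⟩ := Submodule.mem_span_singleton.mp htv
  have h1 : t' (t' v₀) = (c * c) • v₀ := by
    rw [← hc, _root_.map_smul, ← hc, smul_smul]
  rw [htt v₀] at h1
  have h2 : (c * c + 1) • v₀ = 0 := by
    rw [add_smul, one_smul, ← h1, neg_add_cancel]
  rcases smul_eq_zero.mp h2 with h3 | h3
  · nlinarith [sq_nonneg c]
  · exact hv₀ h3

lemma oddcore (Γ : Subgroup (OG 4)) (g t : Γ) (hrel : g * t * g = t)
    (htt : ∀ y : En 4, ((t : Γ) : OG 4) (((t : Γ) : OG 4) y) = -y)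
    (x : En 4) (hx0 : x ≠ 0) (hfix : ((g : Γ) : OG 4) x = x) (hg1 : g ≠ 1) : g * g = 1 := by
  set V : Submodule ℝ (En 4) := fixedBy ((g : Γ) : OG 4) with hVdef
  have hxV : x ∈ V := hfix
  have hgV : ∀ v ∈ V, ((g : Γ) : OG 4) v ∈ V := by
    intro v hv
    show ((g : Γ) : OG 4) (((g : Γ) : OG 4) v) = ((g : Γ) : OG 4) v
    rw [show ((g : Γ) : OG 4) v = v from hv]
    exact hv
  have htV : ∀ v ∈ V, ((t : Γ) : OG 4) v ∈ V := by
    intro v hv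
    show ((g : Γ) : OG 4) (((t : Γ) : OG 4) v) = ((t : Γ) : OG 4) v
    have h1 : ((g * t * g : Γ) : OG 4) v = ((t : Γ) : OG 4) v := by rw [hrel]
    have h2 : ((g * t * g : Γ) : OG 4) v
        = ((g : Γ) : OG 4) (((t : Γ) : OG 4) (((g : Γ) : OG 4) v)) := rfl
    rw [h2, show ((g : Γ) : OG 4) v = v from hv] at h1
    exact h1
  have hgW : ∀ w ∈ Vᗮ, ((g : Γ) : OG 4) w ∈ Vᗮ := preserve_orth _ V hgV
  have htW : ∀ w ∈ Vᗮ, ((t : Γ) : OG 4) w ∈ Vᗮ := preserve_orth _ V htV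
  have hfr : finrank ℝ V + finrank ℝ Vᗮ = 4 := by
    have h := Submodule.finrank_add_finrank_orthogonal (K := V)
    rwa [finrank_euclideanSpace_fin] at h
  have hV0 : finrank ℝ V ≠ 0 := by
    intro h
    have hbot : V = ⊥ := Submodule.finrank_eq_zero.mp h
    rw [hbot, Submodule.mem_bot] at hxV
    exact hx0 hxV
  have hV4 : finrank ℝ V ≠ 4 := by
    intro h
    have hT : V = ⊤ := Submodule.eq_top_of_finrank_eq (by rw [h, finrank_euclideanSpace_fin])
    apply hg1
    apply Subtype.ext
    show ((g : Γ) : OG 4) = 1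
    apply LinearIsometryEquiv.ext
    intro y
    have hy : y ∈ V := by rw [hT]; trivial
    exact hy
  have hVne1 : finrank ℝ V ≠ 1 := fun h => dim_one_contr ((t : Γ) : OG 4) V h htV htt
  have hWne1 : finrank ℝ ↥Vᗮ ≠ 1 := fun h => dim_one_contr ((t : Γ) : OG 4) Vᗮ h htW htt
  have hW2 : finrank ℝ ↥Vᗮ = 2 := by omega
  set b : OrthonormalBasis (Fin 2) ℝ ↥Vᗮ :=
    (stdOrthonormalBasis ℝ ↥Vᗮ).reindex (finCongr (by rw [hW2])) with hbdef
  set MG := matOf b ((g : Γ) : OG 4) hgW with hMG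
  set MT := matOf b ((t : Γ) : OG 4) htW with hMT
  have oG : MGᵀ * MG = 1 := matOf_orth b _ hgW
  have oT : MTᵀ * MT = 1 := matOf_orth b _ htW
  have hgtW : ∀ w ∈ Vᗮ, ((g * t : Γ) : OG 4) w ∈ Vᗮ := fun w hw => hgW _ (htW w hw)
  have hgtgW : ∀ w ∈ Vᗮ, ((g * t * g : Γ) : OG 4) w ∈ Vᗮ := fun w hw => hgtW _ (hgW w hw)
  have httW : ∀ w ∈ Vᗮ, ((t * t : Γ) : OG 4) w ∈ Vᗮ := fun w hw => htW _ (htW w hw)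
  have hGTG : MG * MT * MG = MT := by
    have e2 : matOf b ((g * t : Γ) : OG 4) hgtW = MG * MT :=
      matOf_mul b _ _ hgW htW hgtW
    have e1 : matOf b ((g * t * g : Γ) : OG 4) hgtgW
        = matOf b ((g * t : Γ) : OG 4) hgtW * MG := matOf_mul b _ _ hgtW hgW hgtgW
    rw [e2] at e1
    rw [← e1]
    have hOG : ((g * t * g : Γ) : OG 4) = ((t : Γ) : OG 4) := by rw [hrel]
    exact matOf_congr b hOG hgtgW htW
  have hTT : MT * MT = -1 := by
    have e1 : matOf b ((t * t : Γ) : OG 4) httW = MT * MT :=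
      matOf_mul b _ _ htW htW httW
    rw [← e1]
    exact matOf_neg b _ httW (fun w _ => htt w)
  have hGG : MG * MG = 1 := by
    rcases orth_det_pm MG oG with hdG | hdG
    · rcases orth_det_pm MT oT with hdT | hdT
      · have hcomm : MG * MT = MT * MG := so2_comm MG MT oG oT hdG hdT
        have h1 : MT * (MG * MG) = MT := by
          calc MT * (MG * MG) = (MT * MG) * MG := by rw [mul_assoc]
            _ = (MG * MT) * MG := by rw [hcomm]
            _ = MT := hGTG
        exact orth_cancel_left MT _ oT h1
      · exfalso
        have h1 := o2_sq MT oT hdT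
        rw [hTT] at h1
        exact matrix_neg_one_ne_one h1
    · exact o2_sq MG oG hdG
  have hfixW : ∀ w ∈ Vᗮ, ((g * g : Γ) : OG 4) w = w := by
    have hggW : ∀ w ∈ Vᗮ, ((g * g : Γ) : OG 4) w ∈ Vᗮ := fun w hw => hgW _ (hgW w hw)
    have e1 : matOf b ((g * g : Γ) : OG 4) hggW = MG * MG := matOf_mul b _ _ hgW hgW hggW
    exact matOf_fix b _ hggW (by rw [e1, hGG])
  have hfixV : ∀ v ∈ V, ((g * g : Γ) : OG 4) v = v := by
    intro v hv
    show ((g : Γ) : OG 4) (((g : Γ) : OG 4) v) = v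
    rw [show ((g : Γ) : OG 4) v = v from hv]
    exact hv
  have hOG1 : ((g * g : Γ) : OG 4) = 1 := by
    apply LinearIsometryEquiv.ext
    intro y
    obtain ⟨v, hv, w, hw, rfl⟩ := decompose V y
    rw [_root_.map_add, hfixV v hv, hfixW w hw]
    rfl
  exact Subtype.ext hOG1

lemma pow_fix (γ : OG 4) (x : En 4) (h : γ x = x) : ∀ m : ℕ, (γ ^ m) x = x := by
  intro m
  induction m with
  | zero => rw [pow_zero]; rfl
  | succ n ih =>
    rw [pow_succ]
    show (γ ^ n) (γ x) = x
    rw [h, ih]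

/-- A finite subgroup of `SO(4)` isomorphic as an abstract group to `SL(2, 5)`
acts freely on `ℝ⁴ \ {0}`; in particular it acts freely on the unit sphere
`S³`. -/
theorem SL2_5_in_SO4_is_Poincare (Γ : Subgroup (OG 4)) [Finite Γ]
    (hdet : ∀ g ∈ Γ, detOne g)
    (hiso : Nonempty (Γ ≃* SL2 5)) :
    (∀ g ∈ Γ, g ≠ 1 → ∀ x : En 4, x ≠ 0 → g x ≠ x) ∧
      (∀ g ∈ Γ, g ≠ 1 → ∀ x : Sph 4, g • x ≠ x) := by
  obtain ⟨φ⟩ := hiso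
  have main : ∀ g ∈ Γ, g ≠ 1 → ∀ x : En 4, x ≠ 0 → g x ≠ x := by
    intro g hg hgne x hx0 hfix
    set gΓ : Γ := ⟨g, hg⟩ with hgΓdef
    have hgΓ1 : gΓ ≠ 1 := by
      intro h
      exact hgne (congrArg Subtype.val h)
    set n := orderOf gΓ with hndef
    have hn0 : n ≠ 0 := (orderOf_pos gΓ).ne'
    have hn1 : n ≠ 1 := fun h => hgΓ1 (orderOf_eq_one_iff.mp h)
    obtain ⟨p, hpdef⟩ : ∃ q, q = n.minFac := ⟨n.minFac, rfl⟩
    have hp : p.Prime := by rw [hpdef]; exact Nat.minFac_prime hn1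
    set h : Γ := gΓ ^ (n / p) with hhdef
    have hord : orderOf h = p := by
      rw [hhdef, orderOf_pow, ← hndef, hpdef,
        Nat.gcd_eq_right (Nat.div_dvd_of_dvd n.minFac_dvd)]
      exact Nat.div_div_self n.minFac_dvd hn0
    have hfixh : ((h : Γ) : OG 4) x = x := by
      rw [hhdef]
      have hcoe : ((gΓ ^ (n / p) : Γ) : OG 4) = g ^ (n / p) := by
        rw [SubgroupClass.coe_pow]
      rw [hcoe]
      exact pow_fix g x hfix (n / p)
    have hh1 : h ≠ 1 := by
      intro h1
      rw [h1, orderOf_one] at hord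
      exact hp.one_lt.ne hord
    set a : SL2 5 := φ h with hadef
    have ha1 : a ≠ 1 := by
      intro h1
      apply hh1
      apply φ.injective
      rw [← hadef, h1, _root_.map_one]
    have hap : a ^ p = 1 := by
      rw [hadef, ← _root_.map_pow, ← hord, pow_orderOf_eq_one, _root_.map_one]
    have hAdet : (a : Matrix (Fin 2) (Fin 2) (ZMod 5)).det = 1 := a.2
    have hcoepow : ∀ m : ℕ, ((a ^ m : SL2 5) : Matrix (Fin 2) (Fin 2) (ZMod 5))
        = (a : Matrix (Fin 2) (Fin 2) (ZMod 5)) ^ m := fun m =>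
      Matrix.SpecialLinearGroup.coe_pow a m
    haveI : Fact p.Prime := ⟨hp⟩
    have horda : orderOf a = p := orderOf_eq_prime hap ha1
    have hp235 : p = 2 ∨ p = 3 ∨ p = 5 := by
      rcases matD2 (a : Matrix (Fin 2) (Fin 2) (ZMod 5)) hAdet with
        h1 | hk | hk | hk | hk | hk | hk
      · exact absurd (Subtype.ext h1) ha1
      · exact prime_dvd_small hp (by norm_num) (horda ▸ orderOf_dvd_of_pow_eq_one (pow_eq_one_of_matrix hk))
      · exact prime_dvd_small hp (by norm_num) (horda ▸ orderOf_dvd_of_pow_eq_one (pow_eq_one_of_matrix hk))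
      · exact prime_dvd_small hp (by norm_num) (horda ▸ orderOf_dvd_of_pow_eq_one (pow_eq_one_of_matrix hk))
      · exact prime_dvd_small hp (by norm_num) (horda ▸ orderOf_dvd_of_pow_eq_one (pow_eq_one_of_matrix hk))
      · exact prime_dvd_small hp (by norm_num) (horda ▸ orderOf_dvd_of_pow_eq_one (pow_eq_one_of_matrix hk))
      · exact prime_dvd_small hp (by norm_num) (horda ▸ orderOf_dvd_of_pow_eq_one (pow_eq_one_of_matrix hk))
    have oddstep : p = 3 ∨ p = 5 → False := by
      intro hpv35
      have hpow35 : (a : Matrix (Fin 2) (Fin 2) (ZMod 5)) ^ 3 = 1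
          ∨ (a : Matrix (Fin 2) (Fin 2) (ZMod 5)) ^ 5 = 1 := by
        rcases hpv35 with hpv | hpv
        · left
          have h3 := congrArg Subtype.val (hpv ▸ hap : a ^ 3 = 1)
          rw [hcoepow 3] at h3
          exact h3
        · right
          have h5 := congrArg Subtype.val (hpv ▸ hap : a ^ 5 = 1)
          rw [hcoepow 5] at h5
          exact h5
      obtain ⟨T, hTdet, hTT, hATA⟩ := matD3 _ hAdet hpow35
      set τ : SL2 5 := ⟨T, hTdet⟩ with hτdef
      have hττ : τ * τ = negOne := Subtype.ext hTT
      have haτa : a * τ * a = τ := Subtype.ext hATA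
      set t : Γ := φ.symm τ with htdef
      have hrel : h * t * h = t := by
        apply φ.injective
        rw [_root_.map_mul, _root_.map_mul, htdef, MulEquiv.apply_symm_apply, ← hadef]
        exact haτa
      have httz : t * t = φ.symm negOne := by
        apply φ.injective
        rw [_root_.map_mul, htdef, MulEquiv.apply_symm_apply, MulEquiv.apply_symm_apply]
        exact hττ
      have httOG : ∀ y : En 4, ((t : Γ) : OG 4) (((t : Γ) : OG 4) y) = -y := by
        intro y
        have h1 : ((t * t : Γ) : OG 4) y = ((t : Γ) : OG 4) (((t : Γ) : OG 4) y) := rfl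
        rw [← h1, httz]
        exact step1' Γ φ y
      have hgg := oddcore Γ h t hrel httOG x hx0 hfixh hh1
      have hdvd2 : p ∣ 2 := by
        rw [← hord]
        exact orderOf_dvd_of_pow_eq_one (by rw [pow_two]; exact hgg)
      rcases hpv35 with hpv | hpv <;> rw [hpv] at hdvd2 <;> norm_num at hdvd2
    rcases hp235 with hpv | hpv | hpv
    · -- p = 2 : h is the central involution
      have haa : (a : Matrix (Fin 2) (Fin 2) (ZMod 5))
          * (a : Matrix (Fin 2) (Fin 2) (ZMod 5)) = 1 := by
        have h2 : a ^ 2 = 1 := hpv ▸ hap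
        have := congrArg (Subtype.val) h2
        rw [hcoepow 2, pow_two] at this
        exact this
      rcases matD1 _ hAdet haa with h1 | h1
      · exact absurd (Subtype.ext h1) ha1
      · have hanegone : a = negOne := Subtype.ext h1
        have hzh : h = φ.symm negOne := by
          rw [← hanegone, hadef, MulEquiv.symm_apply_apply]
        rw [hzh] at hfixh
        exact hx0 (step1 Γ φ x hfixh)
    · exact oddstep (Or.inl hpv)
    · exact oddstep (Or.inr hpv)
  refine ⟨main, ?_⟩
  intro g hg hgne x hgx
  have hx0 : (x : En 4) ≠ 0 := by
    intro h0
    have hx1 := mem_sphere_zero_iff_norm.mp x.2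
    rw [h0, norm_zero] at hx1
    norm_num at hx1
  exact main g hg hgne (x : En 4) hx0 (congrArg Subtype.val hgx)
end
end

section
/- Let Γ be a finite subgroup of the orthogonal group O(n) and let x be a unit vector in ℝⁿ. Let Γ_x be the stabilizer of x in Γ. Then the subgroup of Γ_x generated by all minimal subgroups of the Γ_x-action, (Γ_x)_min, is contained in the stabilizer of x in Γ_min, i.e. (Γ_x)_min ≤ Γ_min ⊓ Γ_x. -/
noncomputable section

/-- If `H ≤ Γ ⊓ stab x`, then `x ∈ fixedSub H`, and `Fsub Γ (fixedSub H)` coincides with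
`Fsub (Γ ⊓ stab x) (fixedSub H)`. -/
lemma Fsub_inf_stabilizer {n : ℕ} (Γ : Subgroup (OG n)) (x : En n)
    (H : Subgroup (OG n)) (hH : H ≤ Γ ⊓ MulAction.stabilizer (OG n) x) :
    Fsub Γ (fixedSub H) = Fsub (Γ ⊓ MulAction.stabilizer (OG n) x) (fixedSub H) := by
  have hxfix : x ∈ fixedSub H := by
    intro g hg
    exact (hH hg).2
  ext g
  constructor
  · rintro ⟨hgΓ, hfix⟩
    exact ⟨⟨hgΓ, hfix x hxfix⟩, hfix⟩
  · rintro ⟨⟨hgΓ, _⟩, hfix⟩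
    exact ⟨hgΓ, hfix⟩

lemma minimal_of_stabilizer_minimal {n : ℕ} (Γ : Subgroup (OG n)) (x : En n)
    (Γ' : Subgroup (OG n))
    (h : IsMinimalSubgroup (Γ ⊓ MulAction.stabilizer (OG n) x) Γ') :
    IsMinimalSubgroup Γ Γ' := by
  obtain ⟨hle, hnt, hform, hmin⟩ := h
  have hform2 : Γ' = Fsub Γ (fixedSub Γ') := by
    rw [Fsub_inf_stabilizer Γ x Γ' hle]; exact hform
  refine ⟨hle.trans inf_le_left, hnt, hform2, ?_⟩
  intro Γ'' hnt'' hform'' hle''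
  have hle2 : Γ'' ≤ Γ ⊓ MulAction.stabilizer (OG n) x := hle''.trans hle
  refine hmin Γ'' hnt'' ?_ hle''
  rw [← Fsub_inf_stabilizer Γ x Γ'' hle2]
  exact hform''

/-- For a finite subgroup `Γ < O(n)` and a unit vector `x`, the subgroup of the
stabilizer `Γ_x` generated by the minimal subgroups of the `Γ_x`-action is
contained in the stabilizer of `x` in `Γ_min`. -/
theorem stabilizer_minGen_inclusion (n : ℕ) (Γ : Subgroup (OG n)) [Finite Γ]
    (x : En n) (hx : ‖x‖ = 1) :
    minGen (Γ ⊓ MulAction.stabilizer (OG n) x) ≤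
      minGen Γ ⊓ (Γ ⊓ MulAction.stabilizer (OG n) x) := by
  apply iSup₂_le
  intro Γ' hΓ'
  refine le_inf ?_ hΓ'.1
  exact le_iSup₂_of_le Γ' (minimal_of_stabilizer_minimal Γ x Γ' hΓ') le_rfl
end
end

section
/- Let Γ be a finite subgroup of the orthogonal group O(n) and let Γ' be a nontrivial subgroup of Γ with Γ' = F_Γ(Fix(Γ')). Then the action of Γ' on the unit sphere of the orthogonal complement Fix(Γ')^⊥ is free (every nonidentity element of Γ' fixes no nonzero vector of Fix(Γ')^⊥) if and only if Γ' is a minimal subgroup of the Γ-action. -/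
noncomputable section

lemma Fsub_antitone {n : ℕ} (Γ : Subgroup (OG n)) {L M : Submodule ℝ (En n)}
    (h : L ≤ M) : Fsub Γ M ≤ Fsub Γ L := by
  rintro g ⟨hgΓ, hg⟩
  exact ⟨hgΓ, fun x hx => hg x (h hx)⟩

lemma le_fixedSub_Fsub {n : ℕ} (Γ : Subgroup (OG n)) (L : Submodule ℝ (En n)) :
    L ≤ fixedSub (Fsub Γ L) := by
  intro x hx g hg
  exact hg.2 x hx

lemma Fsub_fixedSub_Fsub {n : ℕ} (Γ : Subgroup (OG n)) (L : Submodule ℝ (En n)) :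
    Fsub Γ (fixedSub (Fsub Γ L)) = Fsub Γ L := by
  apply le_antisymm
  · exact Fsub_antitone Γ (le_fixedSub_Fsub Γ L)
  · rintro g ⟨hgΓ, hg⟩
    exact ⟨hgΓ, fun x hx => hx g ⟨hgΓ, hg⟩⟩

lemma fixedSub_antitone {n : ℕ} {H K : Subgroup (OG n)} (h : H ≤ K) :
    fixedSub K ≤ fixedSub H := fun x hx g hg => hx g (h hg)

/-- For a nontrivial subgroup `Γ' ≤ Γ` with `Γ' = F_Γ(Fix(Γ'))`, the action of
`Γ'` on the unit sphere of `Fix(Γ')ᗮ` is free if and only if `Γ'` is a minimal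
subgroup of the `Γ`-action. -/
theorem free_iff_minimal (n : ℕ) (Γ : Subgroup (OG n)) [Finite Γ]
    (Γ' : Subgroup (OG n)) (hle : Γ' ≤ Γ) (hnt : Γ' ≠ ⊥)
    (hF : Γ' = Fsub Γ (fixedSub Γ')) :
    (∀ g ∈ Γ', g ≠ 1 → ∀ x ∈ (fixedSub Γ')ᗮ, x ≠ 0 → g x ≠ x) ↔
      IsMinimalSubgroup Γ Γ' := by
  have hself : ∀ g ∈ Γ', ∀ x ∈ fixedSub Γ', g x = x := fun g hg x hx => hx g hg
  constructor
  · intro hfree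
    refine ⟨hle, hnt, hF, ?_⟩
    intro Γ'' hnt'' hF'' hle''
    obtain ⟨g0, hg1⟩ := Subgroup.ne_bot_iff_exists_ne_one.mp hnt''
    obtain ⟨g, hg⟩ := g0
    have hg1' : g ≠ 1 := fun h => hg1 (Subtype.ext h)
    have hfix : fixedSub Γ'' = fixedSub Γ' := by
      apply le_antisymm
      · intro x hx
        obtain ⟨y, hy, z, hz, hxyz⟩ :=
          Submodule.exists_add_mem_mem_orthogonal (K := fixedSub Γ') x
        have hgz : g z = z := by
          have hgx : g x = x := hx g hg
          have hgy : g y = y := hself g (hle'' hg) y hy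
          have : g y + g z = y + z := by rw [← map_add, ← hxyz, hgx]
          rw [hgy] at this
          exact add_left_cancel this
        by_cases hz0 : z = 0
        · rwa [hxyz, hz0, add_zero]
        · exact absurd hgz (hfree g (hle'' hg) hg1' z hz hz0)
      · exact fixedSub_antitone hle''
    rw [hF'', hfix, ← hF]
  · rintro ⟨-, -, -, hmin⟩ g hg hg1 x hx hx0 hgx
    set L : Submodule ℝ (En n) := fixedSub Γ' ⊔ (ℝ ∙ x) with hL
    have hgL : g ∈ Fsub Γ L := by
      refine ⟨hle hg, fun y hy => ?_⟩
      obtain ⟨a, ha, b, hb, rfl⟩ := Submodule.mem_sup.mp hy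
      obtain ⟨c, rfl⟩ := Submodule.mem_span_singleton.mp hb
      rw [map_add, map_smul, hgx, hself g hg a ha]
    have hΓ''nt : Fsub Γ L ≠ ⊥ := by
      intro h
      exact hg1 (by simpa [h] using hgL)
    have hΓ''le : Fsub Γ L ≤ Γ' := by
      rw [hF]
      exact Fsub_antitone Γ le_sup_left
    have := hmin (Fsub Γ L) hΓ''nt (Fsub_fixedSub_Fsub Γ L).symm hΓ''le
    have hxfix : x ∈ fixedSub Γ' := by
      intro h hh
      rw [← this] at hh
      exact hh.2 x (Submodule.mem_sup_right (Submodule.mem_span_singleton_self x))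
    exact hx0 (inner_self_eq_zero.mp (hx x hxfix))
end
end

section
/- Let V be a real inner product space, let W be a subspace of V, and let v ∈ V with ‖v‖ = 1. Write v = w + u where w is the orthogonal projection of v onto W and u = v − w, and assume u ≠ 0 and w ≠ 0. Let φ be a linear isometric equivalence of V that fixes W pointwise. If the angle between u and φ(u) is at most π/3, then the angle between v and φ(v) is strictly less than the angle between v and w. -/
noncomputable section

/-- Spherical-triangle comparison lemma: let `v = w + u` with `w ∈ W`, `u ∈ Wᗮ`,
`‖v‖ = 1`, `u ≠ 0`, `w ≠ 0`, and let `φ` be a linear isometric equivalence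
fixing `W` pointwise.  If `∠(u, φ u) ≤ π/3` then `∠(v, φ v) < ∠(v, w)`. -/
theorem angle_reduction (V : Type) [NormedAddCommGroup V] [InnerProductSpace ℝ V]
    (W : Submodule ℝ V) (v w u : V) (hw : w ∈ W) (hu : u ∈ Wᗮ)
    (hv : v = w + u) (hvnorm : ‖v‖ = 1) (hu0 : u ≠ 0) (hw0 : w ≠ 0)
    (φ : V ≃ₗᵢ[ℝ] V) (hφ : ∀ y ∈ W, φ y = y)
    (hangle : InnerProductGeometry.angle u (φ u) ≤ Real.pi / 3) :
    InnerProductGeometry.angle v (φ v) < InnerProductGeometry.angle v w := by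

  have hwu : (inner ℝ w u : ℝ) = 0 := (Submodule.mem_orthogonal W u).mp hu w hw
  have hφu : φ u ∈ Wᗮ := by
    rw [Submodule.mem_orthogonal]
    intro y hy
    have h1 := φ.inner_map_map y u
    rw [hφ y hy] at h1
    rw [h1]
    exact (Submodule.mem_orthogonal W u).mp hu y hy
  have hwφu : (inner ℝ w (φ u) : ℝ) = 0 := (Submodule.mem_orthogonal W (φ u)).mp hφu w hw
  have hφv : φ v = w + φ u := by rw [hv, map_add, hφ w hw]
  have hnφu : ‖φ u‖ = ‖u‖ := φ.norm_map u
  have hnφv : ‖φ v‖ = 1 := by rw [φ.norm_map]; exact hvnorm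
  set a := ‖w‖ with ha
  set b := ‖u‖ with hb
  have ha0 : 0 < a := norm_pos_iff.mpr hw0
  have hb0 : 0 < b := norm_pos_iff.mpr hu0
  have hpy : a ^ 2 + b ^ 2 = 1 := by
    have h1 : ‖w + u‖ ^ 2 = a ^ 2 + 2 * (inner ℝ w u : ℝ) + b ^ 2 := norm_add_sq_real w u
    rw [hwu, ← hv, hvnorm] at h1
    nlinarith [h1]
  have ha1 : a < 1 := by nlinarith
  set α := InnerProductGeometry.angle u (φ u) with hα
  have hcos : (inner ℝ u (φ u) : ℝ) = b * b * Real.cos α := by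
    have h1 := InnerProductGeometry.cos_angle u (φ u)
    rw [hnφu, ← hb] at h1
    field_simp at h1
    linarith [h1]
  have hcos_ge : Real.cos α ≥ 1 / 2 := by
    have h1 : Real.cos (Real.pi / 3) ≤ Real.cos α :=
      Real.cos_le_cos_of_nonneg_of_le_pi (InnerProductGeometry.angle_nonneg u (φ u))
        (by linarith [Real.pi_pos]) hangle
    rw [Real.cos_pi_div_three] at h1
    linarith
  have hvw : (inner ℝ v w : ℝ) = a ^ 2 := by
    rw [hv, inner_add_left, real_inner_comm w u, hwu, real_inner_self_eq_norm_sq]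
    ring
  have hvφv : (inner ℝ v (φ v) : ℝ) = a ^ 2 + b * b * Real.cos α := by
    rw [hφv, hv, inner_add_left, inner_add_right, inner_add_right, hwφu,
      real_inner_comm w u, hwu, real_inner_self_eq_norm_sq, hcos]
    ring
  have hcos_le : Real.cos α ≤ 1 := Real.cos_le_one α
  unfold InnerProductGeometry.angle
  rw [hvnorm, hnφv, ← ha, hvw, hvφv]
  have h2 : a ^ 2 / (1 * a) = a := by field_simp
  have h3 : (a ^ 2 + b * b * Real.cos α) / (1 * 1) = a ^ 2 + b * b * Real.cos α := by ring
  rw [h2, h3]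
  have hbb : 0 < b * b := mul_pos hb0 hb0
  have hbb2 : b * b = b ^ 2 := (sq b).symm
  have hk1 : b * b * (1 / 2) ≤ b * b * Real.cos α :=
    mul_le_mul_of_nonneg_left hcos_ge hbb.le
  have hk2 : b * b * Real.cos α ≤ b * b * 1 :=
    mul_le_mul_of_nonneg_left hcos_le hbb.le
  have hk3 : 0 < (1 - a) * (1 - a) := mul_pos (by linarith) (by linarith)
  have ha2 : 0 ≤ a ^ 2 := sq_nonneg a
  apply Real.strictAntiOn_arccos
  · exact ⟨by linarith, by nlinarith⟩
  · exact ⟨by linarith, by linarith⟩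
  · nlinarith
end
end
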